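/- There exists a lattice L* with countable underlying set such that L* is locally finite, universal for finite lattices, and ultrahomogeneous for finite lattices. -/

import Mathlib

/-- A lattice is locally finite if every finite subset is contained in a finite
sublattice (a finite subset closed under `⊔` and `⊓`). -/
def LatLocallyFinite (L : Type) [Lattice L] : Prop :=
  ∀ S : Finset L, ∃ T : Finset L, S ⊆ T ∧ ∀ a ∈ T, ∀ b ∈ T, a ⊔ b ∈ T ∧ a ⊓ b ∈ T

/-- A lattice embedding: an injective map preserving `⊔` and `⊓`. -/
def IsLatEmb {A L : Type} [Lattice A] [Lattice L] (e : A → L) : Prop :=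
  Function.Injective e ∧ ∀ a b : A, e (a ⊔ b) = e a ⊔ e b ∧ e (a ⊓ b) = e a ⊓ e b

/-- A lattice `L` is universal for finite lattices if every finite lattice admits
a lattice embedding into `L`. -/
def UnivFin (L : Type) [Lattice L] : Prop :=
  ∀ (A : Type) [Fintype A] [Lattice A], ∃ e : A → L, IsLatEmb e

/-- A lattice `L` is ultrahomogeneous for finite lattices if for all finite lattices
`A`, `B`, every lattice embedding `j : A → B` and every lattice embedding `e : A → L`,
there is a lattice embedding `e' : B → L` with `e' ∘ j = e`. -/
def UltraFin (L : Type) [Lattice L] : Prop :=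
  ∀ (A B : Type) [Fintype A] [Lattice A] [Fintype B] [Lattice B]
    (j : A → B) (e : A → L), IsLatEmb j → IsLatEmb e →
    ∃ e' : B → L, IsLatEmb e' ∧ e' ∘ j = e

namespace Frai

set_option linter.unusedSectionVars false

theorem latEmb_le_iff {A L : Type} [Lattice A] [Lattice L] {e : A → L}
    (he : IsLatEmb e) {a b : A} : e a ≤ e b ↔ a ≤ b := by
  constructor
  · intro h
    have h2 : e (a ⊔ b) = e b := by rw [(he.2 a b).1, sup_eq_right.2 h]
    exact sup_eq_right.1 (he.1 h2)
  · intro h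
    exact sup_eq_right.1 (by rw [← (he.2 a b).1, sup_eq_right.2 h])

section Amalg

variable {A B C : Type} [Lattice A] [Lattice B] [Lattice C]
  (j : A → B) (e : A → C)

/-- The amalgam preorder on `B ⊕ C`. -/
def rel : B ⊕ C → B ⊕ C → Prop
  | .inl b, .inl b' => b ≤ b'
  | .inr c, .inr c' => c ≤ c'
  | .inl b, .inr c => ∃ x, b ≤ j x ∧ e x ≤ c
  | .inr c, .inl b => ∃ x, c ≤ e x ∧ j x ≤ b

variable {j e}
variable (hj : IsLatEmb j) (he : IsLatEmb e)

theorem rel_refl (x : B ⊕ C) : rel j e x x := by cases x <;> simp [rel]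

include hj he in
theorem rel_trans {x y z : B ⊕ C} (h1 : rel j e x y) (h2 : rel j e y z) : rel j e x z := by
  cases x with
  | inl b => cases y with
    | inl b' => cases z with
      | inl b'' => exact le_trans h1 h2
      | inr c =>
        obtain ⟨a, ha1, ha2⟩ := h2
        exact ⟨a, le_trans h1 ha1, ha2⟩
    | inr c => cases z with
      | inl b'' =>
        obtain ⟨a1, h11, h12⟩ := h1
        obtain ⟨a2, h21, h22⟩ := h2
        have : a1 ≤ a2 := (latEmb_le_iff he).1 (le_trans h12 h21)
        exact le_trans h11 (le_trans ((latEmb_le_iff hj).2 this) h22)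
      | inr c' =>
        obtain ⟨a, ha1, ha2⟩ := h1
        exact ⟨a, ha1, le_trans ha2 h2⟩
  | inr c => cases y with
    | inl b => cases z with
      | inl b' =>
        obtain ⟨a, ha1, ha2⟩ := h1
        exact ⟨a, ha1, le_trans ha2 h2⟩
      | inr c' =>
        obtain ⟨a1, h11, h12⟩ := h1
        obtain ⟨a2, h21, h22⟩ := h2
        have : a1 ≤ a2 := (latEmb_le_iff hj).1 (le_trans h12 h21)
        exact le_trans h11 (le_trans ((latEmb_le_iff he).2 this) h22)
    | inr c' => cases z with
      | inl b =>
        obtain ⟨a, ha1, ha2⟩ := h2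
        exact ⟨a, le_trans h1 ha1, ha2⟩
      | inr c'' => exact le_trans h1 h2

variable (j e) in
/-- Ideals of the amalgam preorder. -/
def Ideal (I : Set (B ⊕ C)) : Prop :=
  (∀ x y, rel j e x y → y ∈ I → x ∈ I) ∧
  (∀ b b', Sum.inl b ∈ I → Sum.inl b' ∈ I → Sum.inl (b ⊔ b') ∈ I) ∧
  (∀ c c', Sum.inr c ∈ I → Sum.inr c' ∈ I → Sum.inr (c ⊔ c') ∈ I)

variable (j e) in
def cl (S : Set (B ⊕ C)) : Set (B ⊕ C) := ⋂₀ {I | Ideal j e I ∧ S ⊆ I}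

theorem Ideal.inter {I J : Set (B ⊕ C)} (hI : Ideal j e I) (hJ : Ideal j e J) :
    Ideal j e (I ∩ J) :=
  ⟨fun x y h hy => ⟨hI.1 x y h hy.1, hJ.1 x y h hy.2⟩,
   fun b b' h h' => ⟨hI.2.1 b b' h.1 h'.1, hJ.2.1 b b' h.2 h'.2⟩,
   fun c c' h h' => ⟨hI.2.2 c c' h.1 h'.1, hJ.2.2 c c' h.2 h'.2⟩⟩

theorem Ideal.cl (S : Set (B ⊕ C)) : Ideal j e (cl j e S) := by
  refine ⟨fun x y h hy => ?_, fun b b' h h' => ?_, fun c c' h h' => ?_⟩ <;>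
    intro I hI <;> simp only [Set.mem_setOf_eq] at hI
  · exact hI.1.1 x y h (hy I hI)
  · exact hI.1.2.1 b b' (h I hI) (h' I hI)
  · exact hI.1.2.2 c c' (h I hI) (h' I hI)

theorem subset_cl (S : Set (B ⊕ C)) : S ⊆ cl j e S :=
  fun x hx I hI => hI.2 hx

theorem cl_min {S I : Set (B ⊕ C)} (hI : Ideal j e I) (h : S ⊆ I) : cl j e S ⊆ I :=
  fun x hx => hx I ⟨hI, h⟩

theorem cl_ideal {I : Set (B ⊕ C)} (hI : Ideal j e I) : cl j e I = I :=
  le_antisymm (cl_min hI le_rfl) (subset_cl I)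


theorem cl_mono {S T : Set (B ⊕ C)} (h : S ⊆ T) : cl j e S ⊆ cl j e T :=
  cl_min (Ideal.cl T) (h.trans (subset_cl T))

theorem cl_union_left (S T : Set (B ⊕ C)) : cl j e (cl j e S ∪ T) = cl j e (S ∪ T) := by
  apply le_antisymm
  · exact cl_min (Ideal.cl _) (Set.union_subset
      (cl_min (Ideal.cl _) (Set.subset_union_left.trans (subset_cl _)))
      (Set.subset_union_right.trans (subset_cl _)))
  · exact cl_mono (Set.union_subset_union_left _ (subset_cl S))

theorem cl_union_right (S T : Set (B ⊕ C)) : cl j e (S ∪ cl j e T) = cl j e (S ∪ T) := by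
  rw [Set.union_comm, cl_union_left, Set.union_comm]

variable (j e) in
/-- The amalgam lattice: ideals of the amalgam preorder. -/
def Amal : Type := {I : Set (B ⊕ C) // Ideal j e I}

instance : Max (Amal j e) := ⟨fun I J => ⟨cl j e (I.1 ∪ J.1), Ideal.cl _⟩⟩
instance : Min (Amal j e) := ⟨fun I J => ⟨I.1 ∩ J.1, I.2.inter J.2⟩⟩

instance instLatAmal : Lattice (Amal j e) := by
  apply Lattice.mk' (α := Amal j e)
  · intro I J; exact Subtype.ext (by simp only [Max.max]; rw [Set.union_comm])
  · intro I J K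
    exact Subtype.ext (by simp only [Max.max]; rw [cl_union_left, cl_union_right,
      Set.union_assoc])
  · intro I J; exact Subtype.ext (Set.inter_comm _ _)
  · intro I J K; exact Subtype.ext (Set.inter_assoc _ _ _)
  · intro I J
    apply Subtype.ext
    show cl j e (I.1 ∪ (I.1 ∩ J.1)) = I.1
    rw [Set.union_eq_self_of_subset_right Set.inter_subset_left, cl_ideal I.2]
  · intro I J
    apply Subtype.ext
    show I.1 ∩ cl j e (I.1 ∪ J.1) = I.1
    exact Set.inter_eq_self_of_subset_left
      (Set.subset_union_left.trans (subset_cl _))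

theorem amal_sup_val (I J : Amal j e) : (I ⊔ J).1 = cl j e (I.1 ∪ J.1) := rfl
theorem amal_inf_val (I J : Amal j e) : (I ⊓ J).1 = I.1 ∩ J.1 := rfl

variable (j e) in
def pIdl (z : B ⊕ C) : Set (B ⊕ C) := {x | rel j e x z}

include hj he in
theorem pIdl_ideal (z : B ⊕ C) : Ideal j e (pIdl j e z) := by
  refine ⟨fun x y hxy hy => rel_trans hj he hxy hy, ?_, ?_⟩
  · intro b b' hb hb'
    cases z with
    | inl b'' => exact sup_le hb hb'
    | inr c =>
      obtain ⟨a1, h11, h12⟩ := hb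
      obtain ⟨a2, h21, h22⟩ := hb'
      exact ⟨a1 ⊔ a2, by rw [(hj.2 a1 a2).1]; exact sup_le_sup h11 h21,
        by rw [(he.2 a1 a2).1]; exact sup_le h12 h22⟩
  · intro c c' hc hc'
    cases z with
    | inr c'' => exact sup_le hc hc'
    | inl b =>
      obtain ⟨a1, h11, h12⟩ := hc
      obtain ⟨a2, h21, h22⟩ := hc'
      exact ⟨a1 ⊔ a2, by rw [(he.2 a1 a2).1]; exact sup_le_sup h11 h21,
        by rw [(hj.2 a1 a2).1]; exact sup_le h12 h22⟩

def uEmb (b : B) : Amal j e := ⟨pIdl j e (Sum.inl b), pIdl_ideal hj he _⟩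

def vEmb (c : C) : Amal j e := ⟨pIdl j e (Sum.inr c), pIdl_ideal hj he _⟩

include hj he in
theorem uEmb_isLatEmb : IsLatEmb (uEmb hj he) := by
  constructor
  · intro b b' h
    have hs : pIdl j e (Sum.inl b) = pIdl j e (Sum.inl b') := congrArg Subtype.val h
    have h1 : Sum.inl (β := C) b ∈ pIdl j e (Sum.inl b') := hs ▸ rel_refl (j := j) (e := e) (Sum.inl b)
    have h2 : Sum.inl (β := C) b' ∈ pIdl j e (Sum.inl b) := hs.symm ▸ rel_refl (j := j) (e := e) (Sum.inl b')
    exact le_antisymm (h1 : b ≤ b') (h2 : b' ≤ b)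
  · intro b b'
    constructor
    · apply Subtype.ext
      rw [amal_sup_val]
      apply le_antisymm
      · intro x hx I hI
        obtain ⟨hId, hsub⟩ := hI
        refine hId.1 x _ hx (hId.2.1 b b' ?_ ?_)
        · exact hsub (Or.inl (rel_refl (j := j) (e := e) (Sum.inl b)))
        · exact hsub (Or.inr (rel_refl (j := j) (e := e) (Sum.inl b')))
      · refine cl_min (pIdl_ideal hj he _) (Set.union_subset ?_ ?_)
        · intro x hx
          exact rel_trans hj he hx
            (show rel j e (Sum.inl b) (Sum.inl (b ⊔ b')) from le_sup_left)
        · intro x hx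
          exact rel_trans hj he hx
            (show rel j e (Sum.inl b') (Sum.inl (b ⊔ b')) from le_sup_right)
    · apply Subtype.ext
      rw [amal_inf_val]
      apply Set.eq_of_subset_of_subset
      · intro x hx
        exact ⟨rel_trans hj he hx (show rel j e (Sum.inl (b ⊓ b')) (Sum.inl b) from inf_le_left),
          rel_trans hj he hx (show rel j e (Sum.inl (b ⊓ b')) (Sum.inl b') from inf_le_right)⟩
      · rintro (x | c) ⟨h1, h2⟩
        · exact le_inf h1 h2
        · obtain ⟨a1, h11, h12⟩ := h1
          obtain ⟨a2, h21, h22⟩ := h2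
          refine ⟨a1 ⊓ a2, by rw [(he.2 a1 a2).2]; exact le_inf h11 h21, ?_⟩
          rw [(hj.2 a1 a2).2]
          exact le_inf (inf_le_left.trans h12) (inf_le_right.trans h22)

include hj he in
theorem vEmb_isLatEmb : IsLatEmb (vEmb hj he) := by
  constructor
  · intro c c' h
    have hs : pIdl j e (Sum.inr c) = pIdl j e (Sum.inr c') := congrArg Subtype.val h
    have h1 : Sum.inr (α := B) c ∈ pIdl j e (Sum.inr c') := hs ▸ rel_refl (j := j) (e := e) (Sum.inr c)
    have h2 : Sum.inr (α := B) c' ∈ pIdl j e (Sum.inr c) := hs.symm ▸ rel_refl (j := j) (e := e) (Sum.inr c')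
    exact le_antisymm (h1 : c ≤ c') (h2 : c' ≤ c)
  · intro c c'
    constructor
    · apply Subtype.ext
      rw [amal_sup_val]
      apply le_antisymm
      · intro x hx I hI
        obtain ⟨hId, hsub⟩ := hI
        refine hId.1 x _ hx (hId.2.2 c c' ?_ ?_)
        · exact hsub (Or.inl (rel_refl (j := j) (e := e) (Sum.inr c)))
        · exact hsub (Or.inr (rel_refl (j := j) (e := e) (Sum.inr c')))
      · refine cl_min (pIdl_ideal hj he _) (Set.union_subset ?_ ?_)
        · intro x hx
          exact rel_trans hj he hx
            (show rel j e (Sum.inr c) (Sum.inr (c ⊔ c')) from le_sup_left)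
        · intro x hx
          exact rel_trans hj he hx
            (show rel j e (Sum.inr c') (Sum.inr (c ⊔ c')) from le_sup_right)
    · apply Subtype.ext
      rw [amal_inf_val]
      apply Set.eq_of_subset_of_subset
      · intro x hx
        exact ⟨rel_trans hj he hx (show rel j e (Sum.inr (c ⊓ c')) (Sum.inr c) from inf_le_left),
          rel_trans hj he hx (show rel j e (Sum.inr (c ⊓ c')) (Sum.inr c') from inf_le_right)⟩
      · rintro (b | x) ⟨h1, h2⟩
        · obtain ⟨a1, h11, h12⟩ := h1
          obtain ⟨a2, h21, h22⟩ := h2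
          refine ⟨a1 ⊓ a2, ?_, by rw [(he.2 a1 a2).2]; exact inf_le_inf h12 h22⟩
          rw [(hj.2 a1 a2).2]
          exact le_inf h11 h21
        · exact le_inf h1 h2

include hj he in
theorem uv_comm : (uEmb hj he) ∘ j = (vEmb hj he) ∘ e := by
  funext a
  apply Subtype.ext
  ext x
  cases x with
  | inl b =>
    constructor
    · intro hb; exact ⟨a, hb, le_rfl⟩
    · rintro ⟨x, h1, h2⟩
      exact h1.trans ((latEmb_le_iff hj).2 ((latEmb_le_iff he).1 h2))
  | inr c =>
    constructor
    · rintro ⟨x, h1, h2⟩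
      exact h1.trans ((latEmb_le_iff he).2 ((latEmb_le_iff hj).1 h2))
    · intro hc; exact ⟨a, hc, le_rfl⟩

end Amalg

theorem finAmalg {A B C : Type} [Lattice A] [Lattice B] [Lattice C] [Finite B] [Finite C]
    {j : A → B} {e : A → C} (hj : IsLatEmb j) (he : IsLatEmb e) :
    ∃ (D : Type) (_ : Lattice D) (_ : Fintype D) (u : B → D) (v : C → D),
      IsLatEmb u ∧ IsLatEmb v ∧ u ∘ j = v ∘ e := by
  have : Finite (Amal j e) := Subtype.finite
  exact ⟨Amal j e, inferInstance, Fintype.ofFinite _, uEmb hj he, vEmb hj he,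
    uEmb_isLatEmb hj he, vEmb_isLatEmb hj he, uv_comm hj he⟩

end Frai
namespace Frai

/-- A finite lattice carried on a finite set of naturals, with junk ops outside. -/
structure FinLat where
  car : Finset ℕ
  sup : ℕ → ℕ → ℕ
  inf : ℕ → ℕ → ℕ
  sup_mem : ∀ a ∈ car, ∀ b ∈ car, sup a b ∈ car
  inf_mem : ∀ a ∈ car, ∀ b ∈ car, inf a b ∈ car
  sup_comm : ∀ a ∈ car, ∀ b ∈ car, sup a b = sup b a
  sup_assoc : ∀ a ∈ car, ∀ b ∈ car, ∀ c ∈ car, sup (sup a b) c = sup a (sup b c)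
  inf_comm : ∀ a ∈ car, ∀ b ∈ car, inf a b = inf b a
  inf_assoc : ∀ a ∈ car, ∀ b ∈ car, ∀ c ∈ car, inf (inf a b) c = inf a (inf b c)
  sup_inf_self : ∀ a ∈ car, ∀ b ∈ car, sup a (inf a b) = a
  inf_sup_self : ∀ a ∈ car, ∀ b ∈ car, inf a (sup a b) = a

namespace FinLat

def Pt (P : FinLat) : Type := {x : ℕ // x ∈ P.car}

instance (P : FinLat) : Max P.Pt := ⟨fun x y => ⟨P.sup x.1 y.1, P.sup_mem _ x.2 _ y.2⟩⟩
instance (P : FinLat) : Min P.Pt := ⟨fun x y => ⟨P.inf x.1 y.1, P.inf_mem _ x.2 _ y.2⟩⟩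
instance (P : FinLat) : Fintype P.Pt := FinsetCoe.fintype P.car

instance instLatPt (P : FinLat) : Lattice P.Pt := by
  apply Lattice.mk'
  · intro x y; apply Subtype.ext
    show P.sup x.1 y.1 = P.sup y.1 x.1
    exact P.sup_comm _ x.2 _ y.2
  · intro x y z; apply Subtype.ext
    show P.sup (P.sup x.1 y.1) z.1 = P.sup x.1 (P.sup y.1 z.1)
    exact P.sup_assoc _ x.2 _ y.2 _ z.2
  · intro x y; apply Subtype.ext
    show P.inf x.1 y.1 = P.inf y.1 x.1
    exact P.inf_comm _ x.2 _ y.2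
  · intro x y z; apply Subtype.ext
    show P.inf (P.inf x.1 y.1) z.1 = P.inf x.1 (P.inf y.1 z.1)
    exact P.inf_assoc _ x.2 _ y.2 _ z.2
  · intro x y; apply Subtype.ext
    show P.sup x.1 (P.inf x.1 y.1) = x.1
    exact P.sup_inf_self _ x.2 _ y.2
  · intro x y; apply Subtype.ext
    show P.inf x.1 (P.sup x.1 y.1) = x.1
    exact P.inf_sup_self _ x.2 _ y.2

theorem pt_sup_val (P : FinLat) (x y : P.Pt) : (x ⊔ y).1 = P.sup x.1 y.1 := rfl
theorem pt_inf_val (P : FinLat) (x y : P.Pt) : (x ⊓ y).1 = P.inf x.1 y.1 := rfl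

/-- `Q` extends `P`. -/
def Ext (P Q : FinLat) : Prop :=
  P.car ⊆ Q.car ∧
    ∀ a ∈ P.car, ∀ b ∈ P.car, Q.sup a b = P.sup a b ∧ Q.inf a b = P.inf a b

theorem Ext.refl (P : FinLat) : Ext P P := ⟨subset_rfl, fun _ _ _ _ => ⟨Eq.refl _, Eq.refl _⟩⟩

theorem Ext.trans {P Q R : FinLat} (h1 : Ext P Q) (h2 : Ext Q R) : Ext P R :=
  ⟨h1.1.trans h2.1, fun a ha b hb =>
    ⟨((h2.2 a (h1.1 ha) b (h1.1 hb)).1).trans (h1.2 a ha b hb).1,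
     ((h2.2 a (h1.1 ha) b (h1.1 hb)).2).trans (h1.2 a ha b hb).2⟩⟩

/-- Realize a finite lattice `D` extending `P` (via `v`) as a `FinLat` over ℕ
extending `P` literally. -/
theorem realize (P : FinLat) {D : Type} [Lattice D] [Fintype D]
    (v : P.Pt → D) (hv : IsLatEmb v) :
    ∃ (Q : FinLat) (ψ : D → ℕ), P.Ext Q ∧ Function.Injective ψ ∧
      (∀ d, ψ d ∈ Q.car) ∧ (∀ p : P.Pt, ψ (v p) = p.1) ∧
      (∀ d d', Q.sup (ψ d) (ψ d') = ψ (d ⊔ d') ∧ Q.inf (ψ d) (ψ d') = ψ (d ⊓ d')) := by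
  classical
  set M : ℕ := P.car.sup id with hM
  have hcarle : ∀ x ∈ P.car, x ≤ M := fun x hx => Finset.le_sup (f := id) hx
  set en : D ≃ Fin (Fintype.card D) := Fintype.equivFin D with hen
  set ψ : D → ℕ := fun d => if h : ∃ p, v p = d then (Classical.choose h).1 else
    M + 1 + (en d).1 with hψ
  have hψv : ∀ p : P.Pt, ψ (v p) = p.1 := by
    intro p
    have h : ∃ q, v q = v p := ⟨p, Eq.refl _⟩
    have : ψ (v p) = (Classical.choose h).1 := dif_pos h
    rw [this, hv.1 (Classical.choose_spec h)]
  have hψmem : ∀ d, (∃ p, v p = d) → ψ d ∈ P.car := by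
    rintro d ⟨p, rfl⟩
    rw [hψv p]; exact p.2
  have hψbig : ∀ d, ¬(∃ p, v p = d) → ψ d = M + 1 + (en d).1 := fun d h => dif_neg h
  have hψinj : Function.Injective ψ := by
    intro d d' h
    by_cases h1 : ∃ p, v p = d <;> by_cases h2 : ∃ p, v p = d'
    · obtain ⟨p, rfl⟩ := h1; obtain ⟨q, rfl⟩ := h2
      rw [hψv p, hψv q] at h
      exact congrArg v (Subtype.ext h)
    · exfalso
      have hm := hψmem d h1
      rw [h, hψbig d' h2] at hm
      have := hcarle _ hm
      omega
    · exfalso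
      have hm := hψmem d' h2
      rw [← h, hψbig d h1] at hm
      have := hcarle _ hm
      omega
    · rw [hψbig d h1, hψbig d' h2] at h
      have : (en d).1 = (en d').1 := by omega
      exact en.injective (Fin.ext this)
  -- helper to invert ψ
  have hinv : ∀ d : D, ∀ h : ∃ d', ψ d' = ψ d, Classical.choose h = d :=
    fun d h => hψinj (Classical.choose_spec h)
  set Qsup : ℕ → ℕ → ℕ := fun m n =>
    if h : (∃ d, ψ d = m) ∧ (∃ d, ψ d = n) then
      ψ (Classical.choose h.1 ⊔ Classical.choose h.2) else 0 with hQsup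
  set Qinf : ℕ → ℕ → ℕ := fun m n =>
    if h : (∃ d, ψ d = m) ∧ (∃ d, ψ d = n) then
      ψ (Classical.choose h.1 ⊓ Classical.choose h.2) else 0 with hQinf
  have hQs : ∀ d d', Qsup (ψ d) (ψ d') = ψ (d ⊔ d') := by
    intro d d'
    have h : (∃ x, ψ x = ψ d) ∧ (∃ x, ψ x = ψ d') := ⟨⟨d, rfl⟩, ⟨d', rfl⟩⟩
    have : Qsup (ψ d) (ψ d') = ψ (Classical.choose h.1 ⊔ Classical.choose h.2) := dif_pos h
    rw [this, hinv d h.1, hinv d' h.2]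
  have hQi : ∀ d d', Qinf (ψ d) (ψ d') = ψ (d ⊓ d') := by
    intro d d'
    have h : (∃ x, ψ x = ψ d) ∧ (∃ x, ψ x = ψ d') := ⟨⟨d, rfl⟩, ⟨d', rfl⟩⟩
    have : Qinf (ψ d) (ψ d') = ψ (Classical.choose h.1 ⊓ Classical.choose h.2) := dif_pos h
    rw [this, hinv d h.1, hinv d' h.2]
  have hmem : ∀ m, m ∈ Finset.image ψ Finset.univ ↔ ∃ d, ψ d = m := by
    intro m
    simp [Finset.mem_image]
  refine ⟨⟨Finset.image ψ Finset.univ, Qsup, Qinf, ?_, ?_, ?_, ?_, ?_, ?_, ?_, ?_⟩, ψ, ?_, hψinj,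
    ?_, hψv, fun d d' => ⟨hQs d d', hQi d d'⟩⟩
  · rintro a ha b hb
    obtain ⟨d, rfl⟩ := (hmem a).1 ha
    obtain ⟨d', rfl⟩ := (hmem b).1 hb
    simp only [hQs]; exact (hmem _).2 ⟨_, Eq.refl _⟩
  · rintro a ha b hb
    obtain ⟨d, rfl⟩ := (hmem a).1 ha
    obtain ⟨d', rfl⟩ := (hmem b).1 hb
    simp only [hQi]; exact (hmem _).2 ⟨_, Eq.refl _⟩
  · rintro a ha b hb
    obtain ⟨d, rfl⟩ := (hmem a).1 ha
    obtain ⟨d', rfl⟩ := (hmem b).1 hb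
    simp only [hQs]; exact congrArg ψ (_root_.sup_comm d d')
  · rintro a ha b hb c hc
    obtain ⟨d, rfl⟩ := (hmem a).1 ha
    obtain ⟨d', rfl⟩ := (hmem b).1 hb
    obtain ⟨d'', rfl⟩ := (hmem c).1 hc
    simp only [hQs]; exact congrArg ψ (_root_.sup_assoc d d' d'')
  · rintro a ha b hb
    obtain ⟨d, rfl⟩ := (hmem a).1 ha
    obtain ⟨d', rfl⟩ := (hmem b).1 hb
    simp only [hQi]; exact congrArg ψ (_root_.inf_comm d d')
  · rintro a ha b hb c hc
    obtain ⟨d, rfl⟩ := (hmem a).1 ha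
    obtain ⟨d', rfl⟩ := (hmem b).1 hb
    obtain ⟨d'', rfl⟩ := (hmem c).1 hc
    simp only [hQi]; exact congrArg ψ (_root_.inf_assoc d d' d'')
  · rintro a ha b hb
    obtain ⟨d, rfl⟩ := (hmem a).1 ha
    obtain ⟨d', rfl⟩ := (hmem b).1 hb
    simp only [hQi, hQs]; exact congrArg ψ (@_root_.sup_inf_self D _ d d')
  · rintro a ha b hb
    obtain ⟨d, rfl⟩ := (hmem a).1 ha
    obtain ⟨d', rfl⟩ := (hmem b).1 hb
    simp only [hQs, hQi]; exact congrArg ψ (@_root_.inf_sup_self D _ d d')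
  · -- Ext
    constructor
    · intro x hx
      have : ψ (v ⟨x, hx⟩) = x := hψv ⟨x, hx⟩
      exact (hmem _).2 ⟨_, this⟩
    · intro a ha b hb
      set pa : P.Pt := ⟨a, ha⟩
      set pb : P.Pt := ⟨b, hb⟩
      have h1 : ψ (v pa) = a := hψv _
      have h2 : ψ (v pb) = b := hψv _
      constructor
      · calc Qsup a b = Qsup (ψ (v pa)) (ψ (v pb)) := by rw [h1, h2]
          _ = ψ (v pa ⊔ v pb) := hQs _ _
          _ = ψ (v (pa ⊔ pb)) := by rw [(hv.2 pa pb).1]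
          _ = (pa ⊔ pb).1 := hψv _
          _ = P.sup a b := Eq.refl _
      · calc Qinf a b = Qinf (ψ (v pa)) (ψ (v pb)) := by rw [h1, h2]
          _ = ψ (v pa ⊓ v pb) := hQi _ _
          _ = ψ (v (pa ⊓ pb)) := by rw [(hv.2 pa pb).2]
          _ = (pa ⊓ pb).1 := hψv _
          _ = P.inf a b := Eq.refl _
  · intro d
    exact (hmem _).2 ⟨d, rfl⟩

end FinLat

end Frai
namespace Frai

def OpsEmb {α β : Type} (s1 i1 : α → α → α) (s2 i2 : β → β → β) (f : α → β) : Prop :=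
  Function.Injective f ∧ ∀ x y, f (s1 x y) = s2 (f x) (f y) ∧ f (i1 x y) = i2 (f x) (f y)

def OpsOk {α : Type} (s i : α → α → α) : Prop :=
  (∀ a b, s a b = s b a) ∧ (∀ a b c, s (s a b) c = s a (s b c)) ∧
  (∀ a b, i a b = i b a) ∧ (∀ a b c, i (i a b) c = i a (i b c)) ∧
  (∀ a b, s a (i a b) = a) ∧ (∀ a b, i a (s a b) = a)

def opsLattice {α : Type} {s i : α → α → α} (h : OpsOk s i) : Lattice α :=
  @Lattice.mk' α ⟨s⟩ ⟨i⟩ h.1 h.2.1 h.2.2.1 h.2.2.2.1 h.2.2.2.2.1 h.2.2.2.2.2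

theorem opsLattice_sup {α : Type} {s i : α → α → α} (h : OpsOk s i) (x y : α) :
    (letI := opsLattice h; x ⊔ y) = s x y := rfl

def Code : Type :=
  Σ ab : ℕ × ℕ, ((Fin ab.1 → Fin ab.1 → Fin ab.1) × (Fin ab.1 → Fin ab.1 → Fin ab.1)) ×
    ((Fin ab.2 → Fin ab.2 → Fin ab.2) × (Fin ab.2 → Fin ab.2 → Fin ab.2)) ×
    (Fin ab.1 → Fin ab.2) × (Fin ab.1 → ℕ)

instance : Countable Code := by unfold Code; infer_instance

instance : Nonempty Code :=
  ⟨⟨(0, 0), ((fun x _ => x), (fun x _ => x)), ((fun x _ => x), (fun x _ => x)),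
    id, fun _ => 0⟩⟩

/-- The validity of a code (an extension task) relative to a `FinLat`. -/
def Code.Valid (c : Code) (P : FinLat) : Prop :=
  OpsOk c.2.1.1 c.2.1.2 ∧ OpsOk c.2.2.1.1 c.2.2.1.2 ∧
  OpsEmb c.2.1.1 c.2.1.2 c.2.2.1.1 c.2.2.1.2 c.2.2.2.1 ∧
  (∀ x, c.2.2.2.2 x ∈ P.car) ∧
  OpsEmb c.2.1.1 c.2.1.2 P.sup P.inf c.2.2.2.2

theorem Code.Valid.mono {c : Code} {P Q : FinLat} (h : c.Valid P) (hPQ : P.Ext Q) :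
    c.Valid Q := by
  obtain ⟨h1, h2, h3, h4, h5⟩ := h
  refine ⟨h1, h2, h3, fun x => hPQ.1 (h4 x), h5.1, fun x y => ?_⟩
  rw [(hPQ.2 _ (h4 x) _ (h4 y)).1, (hPQ.2 _ (h4 x) _ (h4 y)).2]
  exact h5.2 x y

theorem step_exists (P : FinLat) (c : Code) (hc : c.Valid P) :
    ∃ Q : FinLat, P.Ext Q ∧ ∃ e' : Fin c.1.2 → ℕ, (∀ y, e' y ∈ Q.car) ∧
      OpsEmb c.2.2.1.1 c.2.2.1.2 Q.sup Q.inf e' ∧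
      ∀ x, e' (c.2.2.2.1 x) = c.2.2.2.2 x := by
  obtain ⟨h1, h2, hjr, hem, her⟩ := hc
  letI latA : Lattice (Fin c.1.1) := opsLattice h1
  letI latB : Lattice (Fin c.1.2) := opsLattice h2
  have hj : IsLatEmb c.2.2.2.1 := ⟨hjr.1, fun x y => hjr.2 x y⟩
  set eP : Fin c.1.1 → P.Pt := fun x => ⟨c.2.2.2.2 x, hem x⟩ with heP_def
  have heP : IsLatEmb eP := by
    constructor
    · intro x y hxy
      exact her.1 (congrArg Subtype.val hxy)
    · intro x y
      constructor
      · apply Subtype.ext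
        show c.2.2.2.2 (c.2.1.1 x y) = P.sup (c.2.2.2.2 x) (c.2.2.2.2 y)
        exact (her.2 x y).1
      · apply Subtype.ext
        show c.2.2.2.2 (c.2.1.2 x y) = P.inf (c.2.2.2.2 x) (c.2.2.2.2 y)
        exact (her.2 x y).2
  obtain ⟨D, latD, ftD, u, v, hu, hvv, hcomm⟩ := finAmalg hj heP
  obtain ⟨Q, ψ, hext, hinj, hmem, hval, hops⟩ := P.realize v hvv
  refine ⟨Q, hext, fun y => ψ (u y), fun y => hmem _, ⟨?_, ?_⟩, ?_⟩
  · intro y y' h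
    exact hu.1 (hinj h)
  · intro x y
    constructor
    · exact (congrArg ψ (hu.2 x y).1).trans (hops (u x) (u y)).1.symm
    · exact (congrArg ψ (hu.2 x y).2).trans (hops (u x) (u y)).2.symm
  · intro x
    show ψ (u (c.2.2.2.1 x)) = c.2.2.2.2 x
    have hx : u (c.2.2.2.1 x) = v (eP x) := congrFun hcomm x
    rw [hx, hval]

theorem exists_surj_code : ∃ g : ℕ → Code, Function.Surjective g :=
  exists_surjective_nat Code

noncomputable def theEnum : ℕ → Code := fun n =>
  exists_surj_code.choose (Nat.unpair n).2

theorem theEnum_ge (c : Code) (n0 : ℕ) : ∃ n, n0 ≤ n ∧ theEnum n = c := by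
  obtain ⟨m, hm⟩ := exists_surj_code.choose_spec c
  refine ⟨Nat.pair n0 m, Nat.left_le_pair n0 m, ?_⟩
  unfold theEnum
  rw [Nat.unpair_pair]
  exact hm

def P0 : FinLat where
  car := {0}
  sup := fun _ _ => 0
  inf := fun _ _ => 0
  sup_mem := fun _ _ _ _ => Finset.mem_singleton.2 rfl
  inf_mem := fun _ _ _ _ => Finset.mem_singleton.2 rfl
  sup_comm := fun _ _ _ _ => rfl
  sup_assoc := fun _ _ _ _ _ _ => rfl
  inf_comm := fun _ _ _ _ => rfl
  inf_assoc := fun _ _ _ _ _ _ => rfl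
  sup_inf_self := fun a ha _ _ => (Finset.mem_singleton.1 ha).symm
  inf_sup_self := fun a ha _ _ => (Finset.mem_singleton.1 ha).symm

open scoped Classical in
noncomputable def step (P : FinLat) (c : Code) : FinLat :=
  if h : c.Valid P then (step_exists P c h).choose else P

theorem step_ext (P : FinLat) (c : Code) : P.Ext (step P c) := by
  unfold step
  split_ifs with h
  · exact (step_exists P c h).choose_spec.1
  · exact FinLat.Ext.refl P

theorem step_spec (P : FinLat) (c : Code) (h : c.Valid P) :
    ∃ e' : Fin c.1.2 → ℕ, (∀ y, e' y ∈ (step P c).car) ∧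
      OpsEmb c.2.2.1.1 c.2.2.1.2 (step P c).sup (step P c).inf e' ∧
      ∀ x, e' (c.2.2.2.1 x) = c.2.2.2.2 x := by
  unfold step
  rw [dif_pos h]
  exact (step_exists P c h).choose_spec.2

noncomputable def chain : ℕ → FinLat
  | 0 => P0
  | n + 1 => step (chain n) (theEnum n)

theorem chain_ext {n m : ℕ} (h : n ≤ m) : (chain n).Ext (chain m) := by
  induction m with
  | zero => exact Nat.le_zero.1 h ▸ FinLat.Ext.refl _
  | succ m ih =>
    rcases Nat.lt_or_ge n (m + 1) with h' | h'
    · exact (ih (Nat.lt_succ_iff.1 h')).trans (step_ext _ _)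
    · exact Nat.le_antisymm h h' ▸ FinLat.Ext.refl _

/-- The limit lattice. -/
def Lc : Type := {x : ℕ // ∃ n, x ∈ (chain n).car}

noncomputable def stg (x : Lc) : ℕ := Classical.choose x.2

theorem stg_mem (x : Lc) : x.1 ∈ (chain (stg x)).car := Classical.choose_spec x.2

theorem mem_mono {x : ℕ} {n m : ℕ} (h : n ≤ m) (hx : x ∈ (chain n).car) :
    x ∈ (chain m).car := (chain_ext h).1 hx

theorem op_indep {n m : ℕ} {x y : ℕ} (hxn : x ∈ (chain n).car) (hyn : y ∈ (chain n).car)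
    (hxm : x ∈ (chain m).car) (hym : y ∈ (chain m).car) :
    (chain n).sup x y = (chain m).sup x y ∧ (chain n).inf x y = (chain m).inf x y := by
  have h1 := (chain_ext (le_max_left n m)).2 x hxn y hyn
  have h2 := (chain_ext (le_max_right n m)).2 x hxm y hym
  exact ⟨h1.1.symm.trans h2.1, h1.2.symm.trans h2.2⟩

noncomputable instance : Max Lc :=
  ⟨fun x y => ⟨(chain (max (stg x) (stg y))).sup x.1 y.1,
    ⟨max (stg x) (stg y), FinLat.sup_mem _ _ (mem_mono (le_max_left _ _) (stg_mem x)) _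
      (mem_mono (le_max_right _ _) (stg_mem y))⟩⟩⟩

noncomputable instance : Min Lc :=
  ⟨fun x y => ⟨(chain (max (stg x) (stg y))).inf x.1 y.1,
    ⟨max (stg x) (stg y), FinLat.inf_mem _ _ (mem_mono (le_max_left _ _) (stg_mem x)) _
      (mem_mono (le_max_right _ _) (stg_mem y))⟩⟩⟩

theorem sup_val {x y : Lc} {n : ℕ} (hx : x.1 ∈ (chain n).car) (hy : y.1 ∈ (chain n).car) :
    (x ⊔ y).1 = (chain n).sup x.1 y.1 :=
  (op_indep (mem_mono (le_max_left _ _) (stg_mem x)) (mem_mono (le_max_right _ _) (stg_mem y))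
    hx hy).1

theorem inf_val {x y : Lc} {n : ℕ} (hx : x.1 ∈ (chain n).car) (hy : y.1 ∈ (chain n).car) :
    (x ⊓ y).1 = (chain n).inf x.1 y.1 :=
  (op_indep (mem_mono (le_max_left _ _) (stg_mem x)) (mem_mono (le_max_right _ _) (stg_mem y))
    hx hy).2

theorem sup_mem' {x y : Lc} {n : ℕ} (hx : x.1 ∈ (chain n).car) (hy : y.1 ∈ (chain n).car) :
    (x ⊔ y).1 ∈ (chain n).car := by
  rw [sup_val hx hy]; exact FinLat.sup_mem _ _ hx _ hy

theorem inf_mem' {x y : Lc} {n : ℕ} (hx : x.1 ∈ (chain n).car) (hy : y.1 ∈ (chain n).car) :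
    (x ⊓ y).1 ∈ (chain n).car := by
  rw [inf_val hx hy]; exact FinLat.inf_mem _ _ hx _ hy

noncomputable instance instLatLc : Lattice Lc := by
  apply Lattice.mk'
  · intro x y
    apply Subtype.ext
    set N := max (stg x) (stg y)
    have hx : x.1 ∈ (chain N).car := mem_mono (le_max_left _ _) (stg_mem x)
    have hy : y.1 ∈ (chain N).car := mem_mono (le_max_right _ _) (stg_mem y)
    rw [sup_val hx hy, sup_val hy hx]
    exact (chain N).sup_comm _ hx _ hy
  · intro x y z
    apply Subtype.ext
    set N := max (max (stg x) (stg y)) (stg z)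
    have hx : x.1 ∈ (chain N).car :=
      mem_mono (le_trans (le_max_left _ _) (le_max_left _ _)) (stg_mem x)
    have hy : y.1 ∈ (chain N).car :=
      mem_mono (le_trans (le_max_right _ _) (le_max_left _ _)) (stg_mem y)
    have hz : z.1 ∈ (chain N).car := mem_mono (le_max_right _ _) (stg_mem z)
    rw [sup_val (sup_mem' hx hy) hz, sup_val hx (sup_mem' hy hz), sup_val hx hy,
      sup_val hy hz]
    exact (chain N).sup_assoc _ hx _ hy _ hz
  · intro x y
    apply Subtype.ext
    set N := max (stg x) (stg y)
    have hx : x.1 ∈ (chain N).car := mem_mono (le_max_left _ _) (stg_mem x)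
    have hy : y.1 ∈ (chain N).car := mem_mono (le_max_right _ _) (stg_mem y)
    rw [inf_val hx hy, inf_val hy hx]
    exact (chain N).inf_comm _ hx _ hy
  · intro x y z
    apply Subtype.ext
    set N := max (max (stg x) (stg y)) (stg z)
    have hx : x.1 ∈ (chain N).car :=
      mem_mono (le_trans (le_max_left _ _) (le_max_left _ _)) (stg_mem x)
    have hy : y.1 ∈ (chain N).car :=
      mem_mono (le_trans (le_max_right _ _) (le_max_left _ _)) (stg_mem y)
    have hz : z.1 ∈ (chain N).car := mem_mono (le_max_right _ _) (stg_mem z)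
    rw [inf_val (inf_mem' hx hy) hz, inf_val hx (inf_mem' hy hz), inf_val hx hy,
      inf_val hy hz]
    exact (chain N).inf_assoc _ hx _ hy _ hz
  · intro x y
    apply Subtype.ext
    set N := max (stg x) (stg y)
    have hx : x.1 ∈ (chain N).car := mem_mono (le_max_left _ _) (stg_mem x)
    have hy : y.1 ∈ (chain N).car := mem_mono (le_max_right _ _) (stg_mem y)
    rw [sup_val hx (inf_mem' hx hy), inf_val hx hy]
    exact (chain N).sup_inf_self _ hx _ hy
  · intro x y
    apply Subtype.ext
    set N := max (stg x) (stg y)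
    have hx : x.1 ∈ (chain N).car := mem_mono (le_max_left _ _) (stg_mem x)
    have hy : y.1 ∈ (chain N).car := mem_mono (le_max_right _ _) (stg_mem y)
    rw [inf_val hx (sup_mem' hx hy), sup_val hx hy]
    exact (chain N).inf_sup_self _ hx _ hy

theorem valid_extend (c : Code) (n : ℕ) (h : c.Valid (chain n)) :
    ∃ m, ∃ e' : Fin c.1.2 → ℕ, (∀ y, e' y ∈ (chain m).car) ∧
      OpsEmb c.2.2.1.1 c.2.2.1.2 (chain m).sup (chain m).inf e' ∧
      ∀ x, e' (c.2.2.2.1 x) = c.2.2.2.2 x := by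
  obtain ⟨m, hm, hcm⟩ := theEnum_ge c n
  have hv : c.Valid (chain m) := h.mono (chain_ext hm)
  refine ⟨m + 1, ?_⟩
  have hch : chain (m + 1) = step (chain m) c := by rw [chain, hcm]
  rw [hch]
  exact step_spec _ _ hv

end Frai
namespace Frai

theorem opsOk_of_equiv {α : Type} {n : ℕ} [Lattice α] (q : α ≃ Fin n) :
    OpsOk (fun x y => q (q.symm x ⊔ q.symm y)) (fun x y => q (q.symm x ⊓ q.symm y)) := by
  refine ⟨fun x y => ?_, fun x y z => ?_, fun x y => ?_, fun x y z => ?_,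
    fun x y => ?_, fun x y => ?_⟩
  · show q (q.symm x ⊔ q.symm y) = q (q.symm y ⊔ q.symm x)
    rw [sup_comm]
  · simp [sup_assoc]
  · show q (q.symm x ⊓ q.symm y) = q (q.symm y ⊓ q.symm x)
    rw [inf_comm]
  · simp [inf_assoc]
  · simp
  · simp

theorem lc_countable : Countable Lc := by
  unfold Lc; infer_instance

theorem lc_locallyFinite :
    ∀ S : Finset Lc, ∃ T : Finset Lc, S ⊆ T ∧
      ∀ a ∈ T, ∀ b ∈ T, a ⊔ b ∈ T ∧ a ⊓ b ∈ T := by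
  intro S
  classical
  set N := S.sup stg with hN
  have hmem : ∀ x ∈ S, x.1 ∈ (chain N).car := fun x hx =>
    mem_mono (Finset.le_sup hx) (stg_mem x)
  refine ⟨(chain N).car.attach.image (fun y => (⟨y.1, ⟨N, y.2⟩⟩ : Lc)), ?_, ?_⟩
  · intro x hx
    exact Finset.mem_image.2 ⟨⟨x.1, hmem x hx⟩, Finset.mem_attach _ _, Subtype.ext rfl⟩
  · intro p hp q hq
    obtain ⟨yp, -, rfl⟩ := Finset.mem_image.1 hp
    obtain ⟨yq, -, rfl⟩ := Finset.mem_image.1 hq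
    constructor
    · refine Finset.mem_image.2 ⟨⟨_, sup_mem' (x := ⟨yp.1, ⟨N, yp.2⟩⟩)
        (y := ⟨yq.1, ⟨N, yq.2⟩⟩) yp.2 yq.2⟩, Finset.mem_attach _ _, Subtype.ext rfl⟩
    · refine Finset.mem_image.2 ⟨⟨_, inf_mem' (x := ⟨yp.1, ⟨N, yp.2⟩⟩)
        (y := ⟨yq.1, ⟨N, yq.2⟩⟩) yp.2 yq.2⟩, Finset.mem_attach _ _, Subtype.ext rfl⟩

theorem lc_ultra (A B : Type) [Fintype A] [Lattice A] [Fintype B] [Lattice B]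
    (j : A → B) (e : A → Lc) (hj : IsLatEmb j) (he : IsLatEmb e) :
    ∃ e' : B → Lc, IsLatEmb e' ∧ e' ∘ j = e := by
  classical
  set a := Fintype.card A with ha
  set b := Fintype.card B with hb
  set eqA := Fintype.equivFin A with heqA
  set eqB := Fintype.equivFin B with heqB
  set s1 : Fin a → Fin a → Fin a := fun x y => eqA (eqA.symm x ⊔ eqA.symm y) with hs1
  set i1 : Fin a → Fin a → Fin a := fun x y => eqA (eqA.symm x ⊓ eqA.symm y) with hi1
  set s2 : Fin b → Fin b → Fin b := fun x y => eqB (eqB.symm x ⊔ eqB.symm y) with hs2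
  set i2 : Fin b → Fin b → Fin b := fun x y => eqB (eqB.symm x ⊓ eqB.symm y) with hi2
  set j' : Fin a → Fin b := fun x => eqB (j (eqA.symm x)) with hj'
  set N := Finset.univ.sup (fun x : A => stg (e x)) with hNdef
  have hN : ∀ x : A, (e x).1 ∈ (chain N).car := fun x =>
    mem_mono (Finset.le_sup (Finset.mem_univ x)) (stg_mem _)
  set e0 : Fin a → ℕ := fun x => (e (eqA.symm x)).1 with he0
  have hvalid : Code.Valid ⟨(a, b), (s1, i1), (s2, i2), j', e0⟩ (chain N) := by
    refine ⟨opsOk_of_equiv eqA, opsOk_of_equiv eqB, ⟨?_, ?_⟩, fun x => hN _, ⟨?_, ?_⟩⟩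
    · intro x y hxy
      simp only [hj'] at hxy
      exact eqA.symm.injective (hj.1 (eqB.injective hxy))
    · intro x y
      constructor
      · show eqB (j (eqA.symm (eqA (eqA.symm x ⊔ eqA.symm y)))) =
          eqB (eqB.symm (eqB (j (eqA.symm x))) ⊔ eqB.symm (eqB (j (eqA.symm y))))
        simp [(hj.2 _ _).1]
      · show eqB (j (eqA.symm (eqA (eqA.symm x ⊓ eqA.symm y)))) =
          eqB (eqB.symm (eqB (j (eqA.symm x))) ⊓ eqB.symm (eqB (j (eqA.symm y))))
        simp [(hj.2 _ _).2]
    · intro x y hxy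
      simp only [he0] at hxy
      exact eqA.symm.injective (he.1 (Subtype.ext hxy))
    · intro x y
      constructor
      · show (e (eqA.symm (eqA (eqA.symm x ⊔ eqA.symm y)))).1 = (chain N).sup (e0 x) (e0 y)
        rw [Equiv.symm_apply_apply, (he.2 _ _).1]
        exact sup_val (hN _) (hN _)
      · show (e (eqA.symm (eqA (eqA.symm x ⊓ eqA.symm y)))).1 = (chain N).inf (e0 x) (e0 y)
        rw [Equiv.symm_apply_apply, (he.2 _ _).2]
        exact inf_val (hN _) (hN _)
  obtain ⟨m, e'', hmem'', hemb'', hcomm''⟩ := valid_extend _ N hvalid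
  set eStar : B → Lc := fun y => ⟨e'' (eqB y), ⟨m, hmem'' _⟩⟩ with heStar
  refine ⟨eStar, ⟨?_, ?_⟩, ?_⟩
  · intro y y' h
    exact eqB.injective (hemb''.1 (congrArg Subtype.val h))
  · intro y y'
    have hy : (eStar y).1 ∈ (chain m).car := hmem'' _
    have hy' : (eStar y').1 ∈ (chain m).car := hmem'' _
    constructor
    · apply Subtype.ext
      show e'' (eqB (y ⊔ y')) = (eStar y ⊔ eStar y').1
      have h1 : eqB (y ⊔ y') = s2 (eqB y) (eqB y') := by simp [hs2]
      rw [h1, (hemb''.2 _ _).1, sup_val hy hy']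
    · apply Subtype.ext
      show e'' (eqB (y ⊓ y')) = (eStar y ⊓ eStar y').1
      have h1 : eqB (y ⊓ y') = i2 (eqB y) (eqB y') := by simp [hi2]
      rw [h1, (hemb''.2 _ _).2, inf_val hy hy']
  · funext x
    apply Subtype.ext
    show e'' (eqB (j x)) = (e x).1
    have h1 : eqB (j x) = j' (eqA x) := by simp [hj']
    rw [h1, hcomm'' (eqA x)]
    show (e (eqA.symm (eqA x))).1 = (e x).1
    rw [Equiv.symm_apply_apply]

end Frai

/-- There exists a countable lattice that is locally finite, universal for finite
lattices, and ultrahomogeneous for finite lattices (the Fraïssé limit of the class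
of finite lattices). -/
theorem exists_fraisse_lattice :
    ∃ (L : Type) (inst : Lattice L), Countable L ∧
      @LatLocallyFinite L inst ∧ @UnivFin L inst ∧ @UltraFin L inst := by
  refine ⟨Frai.Lc, Frai.instLatLc, Frai.lc_countable, Frai.lc_locallyFinite, ?_, ?_⟩
  · intro A _ _
    obtain ⟨e', he', -⟩ := Frai.lc_ultra (Fin 0) A Fin.elim0 Fin.elim0
      ⟨fun {x y} _ => x.elim0, fun x => x.elim0⟩ ⟨fun {x y} _ => x.elim0, fun x => x.elim0⟩
    exact ⟨e', he'⟩
  · intro A B _ _ _ _ j e hj he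
    exact Frai.lc_ultra A B j e hj he
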